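/- Let f : U → ℝᵐ be real-analytic on a connected open set U ⊆ ℝⁿ, and let k be the maximal rank of its derivative on U. Then the set V = {x ∈ U | rank(Df(x)) = k} is open, dense in U, and U \ V has Lebesgue measure zero. -/

import Mathlib

open Set MeasureTheory

/-- The rank of the Jacobian (total derivative) of `f` at `x`. -/
noncomputable def jacRank {n m : ℕ} (f : (Fin n → ℝ) → (Fin m → ℝ))
    (x : Fin n → ℝ) : ℕ :=
  Module.finrank ℝ (LinearMap.range (fderiv ℝ f x).toLinearMap)

section Aux

open Module Submodule Matrix

variable {E F : Type*} [NormedAddCommGroup E] [NormedSpace ℝ E]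
  [NormedAddCommGroup F] [NormedSpace ℝ F] [CompleteSpace F]

/-- Iterated derivative of an analytic function along a line. -/
lemma slice_iteratedDeriv {U : Set E} (hU : IsOpen U) {g : E → F}
    (hg : AnalyticOnNhd ℝ g U) (j : ℕ) (x v : E) :
    ∀ t : ℝ, x + t • v ∈ U →
      iteratedDeriv j (fun s : ℝ => g (x + s • v)) t
        = iteratedFDeriv ℝ j g (x + t • v) (fun _ => v) := by
  induction j with
  | zero => intro t ht; simp [iteratedDeriv_zero]
  | succ j ih =>
    intro t ht
    have hline : Continuous (fun s : ℝ => x + s • v) := by continuity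
    have hopen : IsOpen {s : ℝ | x + s • v ∈ U} := hU.preimage hline
    have hmem : t ∈ {s : ℝ | x + s • v ∈ U} := ht
    rw [iteratedDeriv_succ]
    have hev : (fun s : ℝ => iteratedDeriv j (fun s : ℝ => g (x + s • v)) s)
        =ᶠ[nhds t] (fun s : ℝ => iteratedFDeriv ℝ j g (x + s • v) (fun _ => v)) := by
      filter_upwards [hopen.mem_nhds hmem] with s hs
      exact ih s hs
    rw [hev.deriv_eq]
    -- chain rule
    have hgj : AnalyticOnNhd ℝ (iteratedFDeriv ℝ j g) U := hg.iteratedFDeriv j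
    have hdiff : DifferentiableAt ℝ (iteratedFDeriv ℝ j g) (x + t • v) :=
      (hgj _ ht).differentiableAt
    have hline' : HasDerivAt (fun s : ℝ => x + s • v) v t := by
      simpa using ((hasDerivAt_id t).smul_const v).const_add x
    have hcomp : HasDerivAt (fun s : ℝ => iteratedFDeriv ℝ j g (x + s • v))
        (fderiv ℝ (iteratedFDeriv ℝ j g) (x + t • v) v) t :=
      (hdiff.hasFDerivAt).comp_hasDerivAt t hline'
    have happ := (ContinuousMultilinearMap.apply ℝ (fun _ : Fin j => E) F
        (fun _ => v)).hasFDerivAt.comp_hasDerivAt t hcomp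
    have hd := happ.deriv
    simp only [Function.comp_def, ContinuousMultilinearMap.apply_apply] at hd
    rw [hd, iteratedFDeriv_succ_apply_left]
    rfl

lemma rolle_chain {I : Set ℝ} (hI : IsOpen I) (hIc : OrdConnected I) :
    ∀ (j : ℕ) (φ : ℝ → ℝ), AnalyticOnNhd ℝ φ I →
      ∀ t : Fin (j + 1) → ℝ, StrictMono t → (∀ i, t i ∈ I) → (∀ i, φ (t i) = 0) →
      ∃ u ∈ I, iteratedDeriv j φ u = 0 := by
  intro j
  induction j with
  | zero =>
    intro φ hφ t _ htI ht0
    exact ⟨t 0, htI 0, by simpa [iteratedDeriv_zero] using ht0 0⟩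
  | succ j ih =>
    intro φ hφ t hmono htI ht0
    have key : ∀ i : Fin (j + 1), ∃ u, u ∈ Ioo (t i.castSucc) (t i.succ) ∧ deriv φ u = 0 := by
      intro i
      have hlt : t i.castSucc < t i.succ := hmono Fin.castSucc_lt_succ
      have hsub : Icc (t i.castSucc) (t i.succ) ⊆ I :=
        hIc.out (htI i.castSucc) (htI i.succ)
      have hcont : ContinuousOn φ (Icc (t i.castSucc) (t i.succ)) :=
        (hφ.continuousOn).mono hsub
      have := exists_deriv_eq_zero hlt hcont ((ht0 i.castSucc).trans (ht0 i.succ).symm)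
      obtain ⟨c, hc, hc0⟩ := this
      exact ⟨c, hc, hc0⟩
    choose u hu hu0 using key
    have humem : ∀ i, u i ∈ I := fun i =>
      hIc.out (htI i.castSucc) (htI i.succ) ⟨(hu i).1.le, (hu i).2.le⟩
    have humono : StrictMono u := by
      have h1 : ∀ i : Fin j, u i.castSucc < u i.succ := by
        intro i
        calc u i.castSucc < t i.castSucc.succ := (hu i.castSucc).2
        _ ≤ t i.succ.castSucc := by
              apply hmono.monotone
              rw [Fin.le_def]
              simp [Fin.lt_iff_val_lt_val]
        _ < u i.succ := (hu i.succ).1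
      exact Fin.strictMono_iff_lt_succ.2 h1
    obtain ⟨w, hwI, hw0⟩ := ih (deriv φ) (hφ.deriv) u humono humem hu0
    refine ⟨w, hwI, ?_⟩
    rw [iteratedDeriv_succ', hw0]

lemma finite_zeros {I : Set ℝ} (hI : IsOpen I) (hIc : OrdConnected I) {φ : ℝ → ℝ}
    (hφ : AnalyticOnNhd ℝ φ I) (j : ℕ) (hne : ∀ t ∈ I, iteratedDeriv j φ t ≠ 0) :
    {t ∈ I | φ t = 0}.Finite := by
  by_contra hinf
  rw [← Set.Infinite] at hinf
  obtain ⟨s, hs, hcard⟩ := hinf.exists_subset_card_eq (j + 1)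
  set e := s.orderIsoOfFin hcard
  set t : Fin (j + 1) → ℝ := fun i => (e i : ℝ)
  have hmono : StrictMono t := fun a b hab => e.strictMono hab
  have htI : ∀ i, t i ∈ I := fun i => (hs (e i).2).1
  have ht0 : ∀ i, φ (t i) = 0 := fun i => (hs (e i).2).2
  obtain ⟨u, huI, hu0⟩ := rolle_chain hI hIc j φ hφ t hmono htI ht0
  exact hne u huI hu0

variable {E : Type*} [NormedAddCommGroup E] [NormedSpace ℝ E]

lemma exists_diag_ne {g : E → ℝ} {y : E} (hg : AnalyticAt ℝ g y)
    (hne : ¬ (g =ᶠ[nhds y] 0)) :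
    ∃ (j : ℕ) (v : E), iteratedFDeriv ℝ j g y (fun _ => v) ≠ 0 := by
  by_contra h
  push_neg at h
  apply hne
  obtain ⟨p, hp⟩ := hg
  obtain ⟨r, hpr⟩ := hp
  have hball : EMetric.ball y r ∈ nhds y := EMetric.ball_mem_nhds y hpr.r_pos
  filter_upwards [hball] with z hz
  have hz' : z - y ∈ EMetric.ball (0 : E) r := by
    change edist z y < r at hz
    show edist (z - y) 0 < r
    rw [edist_eq_enorm_sub, sub_zero]
    rwa [edist_eq_enorm_sub] at hz
  have hsum := hpr.hasSum_iteratedFDeriv hz'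
  simp only [h] at hsum
  have : g (y + (z - y)) = 0 := by
    simpa using hsum.unique (by simpa using hasSum_zero)
  simpa using this

lemma local_null {N : ℕ} {U : Set (Fin N → ℝ)} (hU : IsOpen U) {g : (Fin N → ℝ) → ℝ}
    (hg : AnalyticOnNhd ℝ g U) {y : Fin N → ℝ} {ρ : ℝ} (hBU : Metric.ball y ρ ⊆ U)
    {j : ℕ} {w : Fin N → ℝ} {i₀ : Fin N} (hw : w i₀ ≠ 0)
    (hne : ∀ x ∈ Metric.ball y ρ, iteratedFDeriv ℝ j g x (fun _ => w) ≠ 0) :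
    volume {x ∈ Metric.ball y ρ | g x = 0} = 0 := by
  classical
  set B := Metric.ball y ρ with hB
  set c : ℝ := (w i₀)⁻¹ with hc
  have hc0 : c ≠ 0 := inv_ne_zero hw
  set v : Fin N → ℝ := c • w with hv
  -- nonvanishing in direction v
  have hnev : ∀ x ∈ B, iteratedFDeriv ℝ j g x (fun _ => v) ≠ 0 := by
    intro x hx
    have : iteratedFDeriv ℝ j g x (fun _ => v)
        = (∏ _i : Fin j, c) • iteratedFDeriv ℝ j g x (fun _ => w) := by
      rw [← ContinuousMultilinearMap.map_smul_univ]
    rw [this]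
    simp only [Finset.prod_const]
    exact smul_ne_zero (pow_ne_zero _ hc0) (hne x hx)
  -- the shear
  set d : Fin N → ℝ := v - Pi.single i₀ 1 with hd
  have hdi₀ : d i₀ = 0 := by
    simp [hd, hv, hc, Pi.single_apply, inv_mul_cancel₀ hw]
  set L : (Fin N → ℝ) →ₗ[ℝ] (Fin N → ℝ) :=
    LinearMap.id + (LinearMap.proj i₀).smulRight d with hL
  have hLapp : ∀ u, L u = u + u i₀ • d := fun u => rfl
  have hLsingle : L (Pi.single i₀ 1) = v := by
    rw [hLapp]; simp [hd]
  have hLsurj : Function.Surjective L := by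
    intro z
    refine ⟨z - z i₀ • d, ?_⟩
    rw [hLapp]
    have : (z - z i₀ • d) i₀ = z i₀ := by simp [hdi₀]
    rw [this]; abel
  have hLcont : Continuous L := L.continuous_of_finiteDimensional
  -- the zero set
  set Z : Set (Fin N → ℝ) := {x ∈ B | g x = 0} with hZ
  have hO : IsOpen {x ∈ B | g x ≠ 0} := by
    rw [isOpen_iff_mem_nhds]
    rintro x ⟨hxB, hxg⟩
    have h1 : ContinuousAt g x := (hg x (hBU hxB)).continuousAt
    filter_upwards [h1.eventually_ne hxg, Metric.isOpen_ball.mem_nhds hxB] with z h1 h2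
    exact ⟨h2, h1⟩
  have hZm : MeasurableSet Z := by
    have : Z = B \ {x ∈ B | g x ≠ 0} := by
      ext x; simp only [hZ, mem_setOf_eq, mem_diff]; tauto
    rw [this]
    exact Metric.isOpen_ball.measurableSet.diff hO.measurableSet
  set A : Set (Fin N → ℝ) := L ⁻¹' Z with hA
  have hAm : MeasurableSet A := hZm.preimage hLcont.measurable
  -- enough: volume A = 0
  suffices hA0 : volume A = 0 by
    have : Z = L '' A := by rw [hA, Set.image_preimage_eq _ hLsurj]
    rw [this, Measure.addHaar_image_linearMap]
    simp [hA0]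
  -- Fubini setup
  set p : Fin N → Prop := fun i => i ≠ i₀ with hp
  set e := MeasurableEquiv.piEquivPiSubtypeProd (fun _ : Fin N => ℝ) p with he
  have hmp := volume_preserving_piEquivPiSubtypeProd (fun _ : Fin N => ℝ) p
  set S := e.symm ⁻¹' A with hS
  have hSm : MeasurableSet S := hAm.preimage e.symm.measurable
  have hAS : A = e ⁻¹' S := by
    rw [hS, ← Set.preimage_comp]
    simp [Function.comp_def]
  rw [hAS, hmp.measure_preimage hSm.nullMeasurableSet]
  have : (volume : Measure ((({ i // p i } → ℝ)) × ({ i // ¬ p i } → ℝ)))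
      = (volume : Measure ({ i // p i } → ℝ)).prod (volume : Measure ({ i // ¬ p i } → ℝ)) := rfl
  rw [this, Measure.measure_prod_null hSm]
  -- now show every slice is null
  refine Filter.Eventually.of_forall (fun Y => ?_)
  show volume (Prod.mk Y ⁻¹' S) = 0
  haveI : Unique { i // ¬ p i } :=
    ⟨⟨⟨i₀, not_not_intro rfl⟩⟩, fun a => Subtype.ext (not_not.1 a.2)⟩
  -- the base point of the line
  set u₀ : Fin N → ℝ := e.symm (Y, 0) with hu₀
  set xY : Fin N → ℝ := L u₀ with hxY
  have hdecomp : ∀ z : { i // ¬ p i } → ℝ,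
      e.symm (Y, z) = u₀ + z default • (Pi.single i₀ 1 : Fin N → ℝ) := by
    intro z
    funext i
    have happ : ∀ (z : { i // ¬ p i } → ℝ),
        e.symm (Y, z) i = if h : p i then Y ⟨i, h⟩ else z ⟨i, h⟩ := fun z => rfl
    by_cases hi : p i
    · have h3 : (Pi.single i₀ 1 : Fin N → ℝ) i = 0 := by
        apply Pi.single_eq_of_ne
        exact fun h => hi (h ▸ rfl) |>.elim
      simp only [Pi.add_apply, Pi.smul_apply, happ, dif_pos hi, hu₀, h3, smul_zero, add_zero]
    · have hii : i = i₀ := not_not.1 hi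
      have hdef : (default : { i // ¬ p i }) = ⟨i, hi⟩ := Subsingleton.elim _ _
      have h3 : (Pi.single i₀ 1 : Fin N → ℝ) i = 1 := by rw [hii]; simp
      simp only [Pi.add_apply, Pi.smul_apply, happ, dif_neg hi, hu₀, h3, smul_eq_mul, mul_one,
        Pi.zero_apply, zero_add, hdef]
  have hline : ∀ z : { i // ¬ p i } → ℝ,
      L (e.symm (Y, z)) = xY + z default • v := by
    intro z
    rw [hdecomp z, map_add, L.map_smul, hLsingle, hxY]
  -- slice set
  set I : Set ℝ := {t | xY + t • v ∈ B} with hI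
  have hIopen : IsOpen I := by
    have : Continuous (fun t : ℝ => xY + t • v) :=
      continuous_const.add (continuous_id.smul continuous_const)
    exact Metric.isOpen_ball.preimage this
  have hIconv : Convex ℝ I := by
    have : I = (AffineMap.lineMap xY (xY + v)) ⁻¹' B := by
      ext t; simp [hI, AffineMap.lineMap_apply, hB]; ring_nf
    rw [this]
    exact (convex_ball y ρ).affine_preimage _
  have hIoc : OrdConnected I := hIconv.ordConnected
  set φ : ℝ → ℝ := fun t => g (xY + t • v) with hφ
  have hφa : AnalyticOnNhd ℝ φ I := by
    have hlineA : AnalyticOnNhd ℝ (fun t : ℝ => xY + t • v) I := by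
      intro t _
      exact (analyticAt_const.add ((analyticAt_id).smul analyticAt_const))
    intro t ht
    have h1 : AnalyticAt ℝ g (xY + t • v) := hg _ (hBU ht)
    have h2 : AnalyticAt ℝ (fun s : ℝ => xY + s • v) t := hlineA t ht
    have := AnalyticAt.comp (f := fun s : ℝ => xY + s • v) h1 h2
    simpa [Function.comp_def] using this
  have hφne : ∀ t ∈ I, iteratedDeriv j φ t ≠ 0 := by
    intro t ht
    rw [slice_iteratedDeriv hU hg j xY v t (hBU ht)]
    exact hnev _ ht
  have hfin : {t ∈ I | φ t = 0}.Finite := finite_zeros hIopen hIoc hφa j hφne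
  -- the slice is the preimage of a finite set
  have hslice : (Prod.mk Y ⁻¹' S) = (fun z : { i // ¬ p i } → ℝ => z default) ⁻¹'
      {t ∈ I | φ t = 0} := by
    ext z
    simp only [hS, Set.mem_preimage, hA, hZ, mem_setOf_eq]
    rw [show e.symm (Y, z) = e.symm (Y, z) from rfl, hline z]
    exact Iff.rfl
  rw [hslice]
  haveI : Nonempty { i // ¬ p i } := ⟨default⟩
  have hqinj : Function.Injective (fun z : { i // ¬ p i } → ℝ => z default) := by
    intro a b hab
    funext i
    rw [Subsingleton.elim i default]
    exact hab
  have hfin2 : ((fun z : { i // ¬ p i } → ℝ => z default) ⁻¹' {t ∈ I | φ t = 0}).Finite :=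
    hfin.preimage hqinj.injOn
  exact hfin2.measure_zero _

lemma zeroset_null {N : ℕ} {U : Set (Fin N → ℝ)} (hU : IsOpen U) (hUc : IsPreconnected U)
    {g : (Fin N → ℝ) → ℝ} (hg : AnalyticOnNhd ℝ g U) (hnz : ∃ x ∈ U, g x ≠ 0) :
    volume {x ∈ U | g x = 0} = 0 := by
  classical
  obtain ⟨x₀, hx₀U, hx₀⟩ := hnz
  rcases Nat.eq_zero_or_pos N with hN | hN
  · have : {x ∈ U | g x = 0} = ∅ := by
      ext x
      simp only [mem_setOf_eq, mem_empty_iff_false, iff_false]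
      rintro ⟨hxU, hx0⟩
      haveI : Subsingleton (Fin N → ℝ) := by
        subst hN; exact ⟨fun a b => funext fun i => absurd i.2 (by omega)⟩
      rw [Subsingleton.elim x x₀] at hx0
      exact hx₀ hx0
    rw [this, measure_empty]
  -- main case
  have key : ∀ y ∈ U, ∃ ρ : ℝ, 0 < ρ ∧ Metric.ball y ρ ⊆ U ∧
      volume {x ∈ Metric.ball y ρ | g x = 0} = 0 := by
    intro y hy
    have hnotev : ¬ (g =ᶠ[nhds y] 0) := by
      intro hev
      have := hg.eqOn_zero_of_preconnected_of_eventuallyEq_zero hUc hy hev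
      exact hx₀ (this hx₀U)
    obtain ⟨j, w, hjw⟩ := exists_diag_ne (hg y hy) hnotev
    -- adjust w to be nonzero
    set i₁ : Fin N := ⟨0, hN⟩
    set w' : Fin N → ℝ := if w = 0 then Pi.single i₁ 1 else w with hw'
    have hjw' : iteratedFDeriv ℝ j g y (fun _ => w') ≠ 0 := by
      by_cases hw0 : w = 0
      · have hj0 : j = 0 := by
          by_contra hj
          haveI : Nonempty (Fin j) := ⟨⟨0, Nat.pos_of_ne_zero hj⟩⟩
          apply hjw
          have : (fun _ : Fin j => w) = 0 := by funext i; rw [hw0]; rfl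
          rw [this]
          exact (iteratedFDeriv ℝ j g y).map_zero
        subst hj0
        have : (fun _ : Fin 0 => w') = (fun _ : Fin 0 => w) := by
          funext i; exact absurd i.2 (by omega)
        rw [this]; exact hjw
      · simp only [hw', if_neg hw0]; exact hjw
    have hw'0 : w' ≠ 0 := by
      by_cases hw0 : w = 0
      · simp only [hw', if_pos hw0]
        intro h
        have := congrFun h i₁
        simp at this
      · simp only [hw', if_neg hw0]; exact hw0
    obtain ⟨i₀, hi₀⟩ : ∃ i, w' i ≠ 0 := by
      by_contra h
      push_neg at h
      exact hw'0 (funext h)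
    -- continuity of the directional derivative
    have hG : ContinuousOn (fun x => iteratedFDeriv ℝ j g x (fun _ => w')) U := by
      have h1 : ContinuousOn (iteratedFDeriv ℝ j g) U := (hg.iteratedFDeriv j).continuousOn
      exact (ContinuousMultilinearMap.apply ℝ (fun _ : Fin j => (Fin N → ℝ)) ℝ
        (fun _ => w')).continuous.comp_continuousOn h1
    have hGy : ContinuousAt (fun x => iteratedFDeriv ℝ j g x (fun _ => w')) y :=
      hG.continuousAt (hU.mem_nhds hy)
    have hevU : ∀ᶠ z in nhds y, z ∈ U := hU.mem_nhds hy
    have hev : ∀ᶠ z in nhds y, z ∈ U ∧ iteratedFDeriv ℝ j g z (fun _ => w') ≠ 0 :=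
      hevU.and (hGy.eventually_ne hjw')
    rw [Metric.eventually_nhds_iff] at hev
    obtain ⟨ρ, hρ, hball⟩ := hev
    have hBU : Metric.ball y ρ ⊆ U := fun z hz => (hball (Metric.mem_ball.1 hz)).1
    have hne : ∀ x ∈ Metric.ball y ρ, iteratedFDeriv ℝ j g x (fun _ => w') ≠ 0 :=
      fun x hx => (hball (Metric.mem_ball.1 hx)).2
    exact ⟨ρ, hρ, hBU, local_null hU hg hBU hi₀ hne⟩
  -- countable cover
  choose ρ hρ hBU hnull using key
  set Bs : U → Set (Fin N → ℝ) := fun y => Metric.ball (y : Fin N → ℝ) (ρ y y.2) with hBs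
  obtain ⟨T, hTc, hTeq⟩ := TopologicalSpace.isOpen_iUnion_countable Bs
    (fun y => Metric.isOpen_ball)
  have hcover : {x ∈ U | g x = 0} ⊆ ⋃ y ∈ T, {x ∈ Bs y | g x = 0} := by
    intro x hx
    have hxU : x ∈ U := hx.1
    have : x ∈ ⋃ y, Bs y := mem_iUnion.2 ⟨⟨x, hxU⟩, Metric.mem_ball_self (hρ x hxU)⟩
    rw [← hTeq] at this
    obtain ⟨y, hyT, hyB⟩ := mem_iUnion₂.1 this
    exact mem_iUnion₂.2 ⟨y, hyT, hyB, hx.2⟩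
  refine measure_mono_null hcover ?_
  refine (measure_biUnion_null_iff hTc).2 fun y _ => ?_
  exact hnull y y.2

lemma exists_indep_comp {K V : Type*} [Field K] [AddCommGroup V] [Module K V]
    {k : ℕ} {ι : Type*} [Fintype ι] (g : ι → V)
    (hk : k ≤ finrank K (span K (range g))) :
    ∃ c : Fin k → ι, LinearIndependent K (fun i => g (c i)) := by
  classical
  obtain ⟨t, hts, htsp, htind⟩ := exists_linearIndependent K (range g)
  have htfin : t.Finite := (Set.finite_range g).subset hts
  haveI : Fintype t := htfin.fintype
  have hcard : finrank K (span K (range g)) = t.toFinset.card := by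
    rw [← htsp]
    rw [finrank_span_set_eq_card htind]
  have hk' : k ≤ Fintype.card t := by
    rw [Set.toFinset_card] at hcard
    omega
  obtain ⟨e⟩ : Nonempty (Fin k ↪ t) := by
    rw [Function.Embedding.nonempty_iff_card_le, Fintype.card_fin]
    exact hk'
  have hmem : ∀ i : Fin k, (e i : V) ∈ range g := fun i => hts (e i).2
  choose c hc using fun i => hmem i
  refine ⟨c, ?_⟩
  have : (fun i => g (c i)) = fun i => ((e i : V)) := by
    funext i; exact hc i
  rw [this]
  exact htind.comp e e.injective

lemma rank_le_iff_minor {m n k : ℕ} (A : Matrix (Fin m) (Fin n) ℝ) :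
    k ≤ A.rank ↔ ∃ (r : Fin k → Fin m) (c : Fin k → Fin n),
      (A.submatrix r c).det ≠ 0 := by
  classical
  constructor
  · intro hk
    -- columns
    have h1 : k ≤ finrank ℝ (span ℝ (range Aᵀ)) := by
      rw [Matrix.rank_eq_finrank_span_cols] at hk; exact hk
    obtain ⟨c, hc⟩ := exists_indep_comp (fun j => Aᵀ j) h1
    set B : Matrix (Fin m) (Fin k) ℝ := A.submatrix id c with hB
    have hBT : Bᵀ = fun j => Aᵀ (c j) := by
      funext j i; rfl
    have hrB : B.rank = k := by
      rw [Matrix.rank_eq_finrank_span_cols, show B.col = fun j => Aᵀ (c j) from hBT]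
      rw [finrank_span_eq_card hc]
      simp
    have hrBT : k ≤ finrank ℝ (span ℝ (range (fun i => B i))) := by
      have h2 : Bᵀ.rank = k := by rw [Matrix.rank_transpose]; exact hrB
      calc k = Bᵀ.rank := h2.symm
        _ = finrank ℝ (span ℝ (range Bᵀᵀ)) := Matrix.rank_eq_finrank_span_cols _
        _ = finrank ℝ (span ℝ (range fun i => B i)) := by
            rw [Matrix.transpose_transpose]
        _ ≤ finrank ℝ (span ℝ (range fun i => B i)) := le_rfl
    obtain ⟨r, hr⟩ := exists_indep_comp (fun i => B i) hrBT
    refine ⟨r, c, ?_⟩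
    have hsub : A.submatrix r c = B.submatrix r id := by
      funext i j; rfl
    have hrows : LinearIndependent ℝ (fun i => (B.submatrix r id) i) := by
      have : (fun i => (B.submatrix r id) i) = fun i => B (r i) := by
        funext i j; rfl
      rw [this]; exact hr
    have hunit : IsUnit (B.submatrix r id) :=
      Matrix.linearIndependent_rows_iff_isUnit.1 hrows
    rw [hsub]
    have := (Matrix.isUnit_iff_isUnit_det _).1 hunit
    exact isUnit_iff_ne_zero.1 this
  · rintro ⟨r, c, hdet⟩
    have hunit : IsUnit (A.submatrix r c) :=
      (Matrix.isUnit_iff_isUnit_det _).2 (isUnit_iff_ne_zero.2 hdet)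
    have hrk : (A.submatrix r c).rank = k := by
      rw [Matrix.rank_of_isUnit _ hunit, Fintype.card_fin]
    -- submatrix = P * A * Q
    have h1 : ((1 : Matrix (Fin m) (Fin m) ℝ).submatrix r (Equiv.refl (Fin m))) * A
        = A.submatrix r id := by
      rw [Matrix.one_submatrix_mul]
      rfl
    have h2 : (A.submatrix r id) * ((1 : Matrix (Fin n) (Fin n) ℝ).submatrix (Equiv.refl (Fin n)) c)
        = A.submatrix r c := by
      rw [Matrix.mul_submatrix_one]
      simp [Matrix.submatrix_submatrix]
    calc k = (A.submatrix r c).rank := hrk.symm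
      _ ≤ (A.submatrix r id).rank := by
          rw [← h2]; exact Matrix.rank_mul_le_left _ _
      _ ≤ A.rank := by
          rw [← h1]; exact Matrix.rank_mul_le_right _ _

lemma finrank_range_eq_rank_toMatrix' {n m : ℕ} (l : (Fin n → ℝ) →ₗ[ℝ] (Fin m → ℝ)) :
    finrank ℝ (LinearMap.range l) = (LinearMap.toMatrix' l).rank := by
  have h : (LinearMap.toMatrix' l).mulVecLin = l := by
    apply LinearMap.ext
    intro v
    calc (LinearMap.toMatrix' l).mulVecLin v = (LinearMap.toMatrix' l) *ᵥ v := rfl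
      _ = Matrix.toLin' (LinearMap.toMatrix' l) v := (Matrix.toLin'_apply _ _).symm
      _ = l v := by rw [Matrix.toLin'_toMatrix']
  rw [Matrix.rank, h]

end Aux

section Main
open Module Submodule Matrix

/-- For `f` real-analytic on a connected open set `U`, the set `V` of points
where the Jacobian attains its maximal rank `k` is open, dense in `U`, and of
full Lebesgue measure in `U`. -/
theorem maxRank_set_open_dense_conull {n m k : ℕ} {U : Set (Fin n → ℝ)}
    (hU : IsOpen U) (hUc : IsConnected U)
    {f : (Fin n → ℝ) → (Fin m → ℝ)} (hf : AnalyticOnNhd ℝ f U)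
    (hle : ∀ x ∈ U, jacRank f x ≤ k) (hmax : ∃ x ∈ U, jacRank f x = k) :
    IsOpen {x | x ∈ U ∧ jacRank f x = k} ∧
    U ⊆ closure {x | x ∈ U ∧ jacRank f x = k} ∧
    volume (U \ {x | x ∈ U ∧ jacRank f x = k}) = 0 := by
  classical
  set J : (Fin n → ℝ) → Matrix (Fin m) (Fin n) ℝ :=
    fun x => LinearMap.toMatrix' (fderiv ℝ f x).toLinearMap with hJ
  set g : (Fin n → ℝ) → ℝ :=
    fun x => ∑ p : (Fin k → Fin m) × (Fin k → Fin n), ((J x).submatrix p.1 p.2).det ^ 2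
    with hg
  -- analyticity of g
  have hfd : AnalyticOnNhd ℝ (fderiv ℝ f) U := hf.fderiv
  have hentry : ∀ (a : Fin m) (b : Fin n),
      AnalyticOnNhd ℝ (fun x => (J x) a b) U := by
    intro a b
    have hJab : (fun x => (J x) a b)
        = fun x => ((ContinuousLinearMap.proj a).comp
            (ContinuousLinearMap.apply ℝ (Fin m → ℝ) (Pi.single b 1))) (fderiv ℝ f x) := by
      funext x
      simp only [hJ, LinearMap.toMatrix'_apply, ContinuousLinearMap.coe_comp',
        Function.comp_apply, ContinuousLinearMap.apply_apply, ContinuousLinearMap.proj_apply,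
        ContinuousLinearMap.coe_coe]
    rw [hJab]
    intro x hx
    exact (ContinuousLinearMap.analyticAt _ _).comp (hfd x hx)
  have hdet : ∀ (r : Fin k → Fin m) (c : Fin k → Fin n),
      AnalyticOnNhd ℝ (fun x => ((J x).submatrix r c).det) U := by
    intro r c
    have : (fun x => ((J x).submatrix r c).det)
        = fun x => ∑ σ : Equiv.Perm (Fin k),
            ((Equiv.Perm.sign σ : ℤ) : ℝ) * ∏ i, (J x) (r (σ i)) (c i) := by
      funext x
      rw [Matrix.det_apply]
      congr 1
      funext σ
      simp [Units.smul_def, zsmul_eq_mul, Matrix.submatrix_apply]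
    rw [this]
    apply Finset.analyticOnNhd_fun_sum
    intro σ _
    have hprod : AnalyticOnNhd ℝ (fun x => ∏ i, (J x) (r (σ i)) (c i)) U :=
      Finset.analyticOnNhd_fun_prod _ (fun i _ => hentry (r (σ i)) (c i))
    intro x hx
    exact analyticAt_const.mul (hprod x hx)
  have hgA : AnalyticOnNhd ℝ g U := by
    apply Finset.analyticOnNhd_fun_sum
    intro p _
    intro x hx
    exact ((hdet p.1 p.2) x hx).pow 2
  -- rank characterization
  have hrank : ∀ x, jacRank f x = (J x).rank := fun x =>
    finrank_range_eq_rank_toMatrix' _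
  have hiff : ∀ x ∈ U, (g x ≠ 0 ↔ jacRank f x = k) := by
    intro x hx
    have h0 : g x = 0 ↔ ∀ p : (Fin k → Fin m) × (Fin k → Fin n),
        ((J x).submatrix p.1 p.2).det = 0 := by
      rw [hg]
      rw [Finset.sum_eq_zero_iff_of_nonneg (fun p _ => sq_nonneg _)]
      constructor
      · intro h p
        have := h p (Finset.mem_univ p)
        exact (pow_eq_zero_iff two_ne_zero).1 this
      · intro h p _
        rw [h p]; ring
    constructor
    · intro hgx
      have : ∃ (r : Fin k → Fin m) (c : Fin k → Fin n), ((J x).submatrix r c).det ≠ 0 := by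
        by_contra hc
        push_neg at hc
        exact hgx (h0.2 fun p => hc p.1 p.2)
      have hk : k ≤ (J x).rank := (rank_le_iff_minor _).2 this
      rw [hrank x]
      exact le_antisymm ((hrank x) ▸ hle x hx) hk
    · intro hk
      have : k ≤ (J x).rank := by rw [← hrank x, hk]
      obtain ⟨r, c, hrc⟩ := (rank_le_iff_minor _).1 this
      intro hgx
      exact hrc ((h0.1 hgx) (r, c))
  have hVeq : {x | x ∈ U ∧ jacRank f x = k} = {x ∈ U | g x ≠ 0} := by
    ext x
    simp only [mem_setOf_eq]
    constructor
    · rintro ⟨hxU, hxk⟩; exact ⟨hxU, (hiff x hxU).2 hxk⟩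
    · rintro ⟨hxU, hxg⟩; exact ⟨hxU, (hiff x hxU).1 hxg⟩
  obtain ⟨x₀, hx₀U, hx₀k⟩ := hmax
  have hx₀g : g x₀ ≠ 0 := (hiff x₀ hx₀U).2 hx₀k
  -- openness
  have hopen : IsOpen {x ∈ U | g x ≠ 0} := by
    rw [isOpen_iff_mem_nhds]
    rintro x ⟨hxU, hxg⟩
    filter_upwards [(hgA x hxU).continuousAt.eventually_ne hxg, hU.mem_nhds hxU] with z h1 h2
    exact ⟨h2, h1⟩
  refine ⟨hVeq ▸ hopen, ?_, ?_⟩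
  · -- density
    rw [hVeq]
    intro x hxU
    rw [mem_closure_iff_nhds]
    by_contra hcl
    push_neg at hcl
    obtain ⟨t, htx, hte⟩ := hcl
    have hev : g =ᶠ[nhds x] 0 := by
      filter_upwards [htx, hU.mem_nhds hxU] with z hzt hzU
      by_contra hz
      have hzmem : z ∈ t ∩ {x ∈ U | g x ≠ 0} := ⟨hzt, hzU, hz⟩
      rw [hte] at hzmem
      exact hzmem
    have := hgA.eqOn_zero_of_preconnected_of_eventuallyEq_zero hUc.isPreconnected hxU hev
    exact hx₀g (this hx₀U)
  · -- measure zero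
    have hdiff : U \ {x | x ∈ U ∧ jacRank f x = k} = {x ∈ U | g x = 0} := by
      rw [hVeq]
      ext z
      simp only [mem_diff, mem_setOf_eq]
      constructor
      · rintro ⟨hzU, hz⟩
        refine ⟨hzU, ?_⟩
        by_contra hzg
        exact hz ⟨hzU, hzg⟩
      · rintro ⟨hzU, hz⟩
        exact ⟨hzU, fun h => h.2 hz⟩
    rw [hdiff]
    exact zeroset_null hU hUc.isPreconnected hgA ⟨x₀, hx₀U, hx₀g⟩

end Main
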